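/- There exist τ₀ ∈ (0,1) and a function C : (0, τ₀) → (0, ∞) with C(τ) → 0 as τ → 0, such that the following holds: whenever τ ∈ (0, τ₀) and δ ∈ (0,1) satisfy 1/δ ∈ ℕ, 1/τ ∈ ℕ and τ/δ ∈ ℕ, then for every n ≥ 1 the Lebesgue measure of E_n = {x ∈ I : D_n(x) ≥ n/2} is at most C(τ)/n². -/

import Mathlib

open MeasureTheory

/-- Center of the interval of the partition `H_i` of `I = (−1/2, 1/2)` into intervals
of length `δ^i` which contains `x`. -/
noncomputable def ctr (δ : ℝ) (i : ℕ) (x : ℝ) : ℝ :=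
  -(1 / 2) + ((⌊(x + 1 / 2) / δ ^ i⌋ : ℝ) + 1 / 2) * δ ^ i

/-- ξ′^{(k)}_i(x) = 1 if x lies in the central subinterval of relative length τ^k of
its interval of the partition H_i, and 0 otherwise. -/
noncomputable def xiP (δ τ : ℝ) (k i : ℕ) (x : ℝ) : ℝ :=
  if |x - ctr δ i x| < τ ^ k * δ ^ i / 2 then 1 else 0

/-- D^k_n(x) = Σ_{l=1}^n ξ′^{(k)}_l(x). -/
noncomputable def Dkn (δ τ : ℝ) (k n : ℕ) (x : ℝ) : ℝ :=
  ∑ l ∈ Finset.Icc 1 n, xiP δ τ k l x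

/-- D_n(x) = Σ_{k=1}^∞ D^k_n(x). -/
noncomputable def Dn (δ τ : ℝ) (n : ℕ) (x : ℝ) : ℝ :=
  ∑' k : ℕ, Dkn δ τ (k + 1) n x

namespace St14

lemma vol_inter_Ico_eq_Ioo (S : Set ℝ) (a b : ℝ) :
    volume (S ∩ Set.Ico a b) = volume (S ∩ Set.Ioo a b) := by
  apply le_antisymm
  · calc volume (S ∩ Set.Ico a b) ≤ volume ((S ∩ Set.Ioo a b) ∪ {a}) := by
          apply measure_mono; rintro x ⟨hS, hab⟩
          rcases eq_or_ne x a with h | h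
          · exact Or.inr (by simp [h])
          · exact Or.inl ⟨hS, lt_of_le_of_ne hab.1 (Ne.symm h), hab.2⟩
       _ ≤ volume (S ∩ Set.Ioo a b) + volume ({a} : Set ℝ) := measure_union_le _ _
       _ = volume (S ∩ Set.Ioo a b) := by simp
  · exact measure_mono (Set.inter_subset_inter_right _ Set.Ioo_subset_Ico_self)

lemma Ico_eq_biUnion (N : ℕ) (hN : 0 < N) (u v : ℕ) (huv : u ≤ v) :
    Set.Ico ((u:ℝ)/N) ((v:ℝ)/N) = ⋃ i ∈ Finset.Ico u v, Set.Ico ((i:ℝ)/N) (((i:ℝ)+1)/N) := by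
  have hN' : (0:ℝ) < N := by exact_mod_cast hN
  ext y
  simp only [Set.mem_Ico, Set.mem_iUnion, Finset.mem_Ico, exists_prop]
  constructor
  · rintro ⟨h1, h2⟩
    have h1' : (u:ℝ) ≤ y * N := by rw [div_le_iff₀ hN'] at h1; linarith
    have h2' : y * N < v := by rw [lt_div_iff₀ hN'] at h2; linarith
    have h0 : (0:ℝ) ≤ y * N := le_trans (by positivity) h1'
    have hfl : (u:ℤ) ≤ ⌊y * N⌋ := Int.le_floor.2 (by exact_mod_cast h1')
    have hfl2 : ⌊y * N⌋ < (v:ℤ) := Int.floor_lt.2 (by exact_mod_cast h2')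
    refine ⟨⌊y * N⌋.toNat, ⟨by omega, by omega⟩, ?_, ?_⟩
    · rw [div_le_iff₀ hN']
      have : ((⌊y * N⌋.toNat : ℤ) : ℝ) ≤ y * N := by
        rw [Int.toNat_of_nonneg (by omega)]; exact Int.floor_le _
      calc ((⌊y * N⌋.toNat : ℕ) : ℝ) = ((⌊y * N⌋.toNat : ℤ) : ℝ) := by push_cast; ring
        _ ≤ y * N := this
    · rw [lt_div_iff₀ hN']
      have : y * N < ((⌊y * N⌋.toNat : ℤ) : ℝ) + 1 := by
        rw [Int.toNat_of_nonneg (by omega)]; exact Int.lt_floor_add_one _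
      calc y * N < ((⌊y * N⌋.toNat : ℤ) : ℝ) + 1 := this
        _ = ((⌊y * N⌋.toNat : ℕ) : ℝ) + 1 := by push_cast; ring
  · rintro ⟨i, ⟨hui, hiv⟩, h1, h2⟩
    constructor
    · refine le_trans ?_ h1
      apply div_le_div_of_nonneg_right ?_ hN'.le
      exact_mod_cast hui
    · refine lt_of_lt_of_le h2 ?_
      apply div_le_div_of_nonneg_right ?_ hN'.le
      have : (i:ℝ) + 1 ≤ v := by exact_mod_cast hiv
      linarith

lemma partition (S : Set ℝ) (hS : MeasurableSet S) (N : ℕ) (hN : 0 < N) (u v : ℕ) (huv : u ≤ v) :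
    volume (S ∩ Set.Ico ((u:ℝ)/N) ((v:ℝ)/N))
      = ∑ i ∈ Finset.Ico u v, volume (S ∩ Set.Ico ((i:ℝ)/N) (((i:ℝ)+1)/N)) := by
  have hN' : (0:ℝ) < N := by exact_mod_cast hN
  rw [Ico_eq_biUnion N hN u v huv, Set.inter_iUnion₂]
  rw [measure_biUnion_finset ?_ ?_]
  · intro a _ b _ hab
    apply Set.disjoint_left.2
    rintro x ⟨-, hx1⟩ ⟨-, hx2⟩
    rcases lt_or_gt_of_ne hab with h | h
    · have : ((a:ℝ)+1)/N ≤ (b:ℝ)/N := by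
        apply div_le_div_of_nonneg_right ?_ hN'.le
        have : (a:ℝ) + 1 ≤ b := by exact_mod_cast h
        linarith
      exact absurd (lt_of_lt_of_le hx1.2 this) (not_lt.2 hx2.1)
    · have : ((b:ℝ)+1)/N ≤ (a:ℝ)/N := by
        apply div_le_div_of_nonneg_right ?_ hN'.le
        have : (b:ℝ) + 1 ≤ a := by exact_mod_cast h
        linarith
      exact absurd (lt_of_lt_of_le hx2.2 this) (not_lt.2 hx1.1)
  · intro b _
    exact hS.inter measurableSet_Ico



lemma cellL1 (N i : ℕ) (hN : 0 < N) (B : Set ℝ) (hB : B ⊆ Set.Ico 0 1) :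
    {y : ℝ | Int.fract ((N:ℝ)*y) ∈ B} ∩ Set.Ico ((i:ℝ)/N) (((i:ℝ)+1)/N)
      = (fun y => (N:ℝ)*y - i) ⁻¹' B := by
  have hN' : (0:ℝ) ≤ N := Nat.cast_nonneg N
  ext y
  simp only [Set.mem_inter_iff, Set.mem_setOf_eq, Set.mem_Ico, Set.mem_preimage]
  have key : ∀ (h1 : (i:ℝ) ≤ (N:ℝ)*y) (h2 : (N:ℝ)*y < (i:ℝ)+1),
      Int.fract ((N:ℝ)*y) = (N:ℝ)*y - i := by
    intro h1 h2
    have : Int.fract ((N:ℝ)*y) = Int.fract ((N:ℝ)*y - (i:ℤ)) := (Int.fract_sub_intCast _ _).symm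
    rw [this, Int.fract_eq_self.2 ⟨by push_cast; linarith, by push_cast; linarith⟩]
    push_cast; ring
  constructor
  · rintro ⟨hf, h1, h2⟩
    have hNr : (0:ℝ) < N := by exact_mod_cast hN
    have h1' : (i:ℝ) ≤ (N:ℝ)*y := by rw [div_le_iff₀ hNr] at h1; linarith
    have h2' : (N:ℝ)*y < (i:ℝ)+1 := by rw [lt_div_iff₀ hNr] at h2; linarith
    rw [key h1' h2'] at hf; exact hf
  · intro hy
    have h0 := hB hy
    simp only [Set.mem_Ico] at h0
    have hNr : (0:ℝ) < N := by exact_mod_cast hN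
    have h1' : (i:ℝ) ≤ (N:ℝ)*y := by linarith [h0.1]
    have h2' : (N:ℝ)*y < (i:ℝ)+1 := by linarith [h0.2]
    refine ⟨by rw [key h1' h2']; exact hy, ?_, ?_⟩
    · rw [div_le_iff₀ hNr]; linarith
    · rw [lt_div_iff₀ hNr]; linarith

lemma vol_affine_preimage (N : ℕ) (hN : 0 < N) (i : ℕ) (B : Set ℝ) (hBm : MeasurableSet B) :
    volume ((fun y => (N:ℝ)*y - i) ⁻¹' B) = ENNReal.ofReal ((N:ℝ)⁻¹) * volume B := by
  have hNr : (N:ℝ) ≠ 0 := by positivity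
  have : (fun y => (N:ℝ)*y - i) = (fun z => -(i:ℝ) + z) ∘ (fun y => (N:ℝ)*y) := by
    funext y; simp; ring
  rw [this, Set.preimage_comp]
  have hmeas : volume ((fun z => -(i:ℝ) + z) ⁻¹' B) = volume B :=
    measure_preimage_add volume _ B
  have hBm' : MeasurableSet ((fun z => -(i:ℝ) + z) ⁻¹' B) :=
    hBm.preimage (measurable_const_add _)
  rw [← Measure.map_apply (measurable_const_mul _) hBm', Real.map_volume_mul_left hNr]
  rw [Measure.smul_apply, smul_eq_mul, hmeas, abs_of_nonneg (by positivity)]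

lemma L1 (N : ℕ) (hN : 0 < N) (B : Set ℝ) (hB : B ⊆ Set.Ico 0 1) (hBm : MeasurableSet B) :
    volume ({y : ℝ | Int.fract ((N:ℝ)*y) ∈ B} ∩ Set.Ioo 0 1) = volume B := by
  have hS : MeasurableSet {y : ℝ | Int.fract ((N:ℝ)*y) ∈ B} :=
    (measurable_fract.comp (measurable_const_mul _)) hBm
  have hNr : (0:ℝ) < N := by exact_mod_cast hN
  rw [← vol_inter_Ico_eq_Ioo]
  have hic2 : Set.Ico (0:ℝ) 1 = Set.Ico (((0:ℕ):ℝ)/N) (((N:ℕ):ℝ)/N) := by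
    norm_num [div_self hNr.ne']
  rw [hic2, partition _ hS N hN 0 N (Nat.zero_le N)]
  have hcell : ∀ i ∈ Finset.Ico 0 N,
      volume ({y : ℝ | Int.fract ((N:ℝ)*y) ∈ B} ∩ Set.Ico ((i:ℝ)/N) (((i:ℝ)+1)/N))
        = ENNReal.ofReal ((N:ℝ)⁻¹) * volume B := by
    intro i _
    rw [cellL1 N i hN B hB, vol_affine_preimage N hN i B hBm]
  rw [Finset.sum_congr rfl hcell, Finset.sum_const]
  simp only [Nat.card_Ico, Nat.sub_zero, nsmul_eq_mul]
  rw [← mul_assoc]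
  have : (N : ENNReal) * ENNReal.ofReal ((N:ℝ)⁻¹) = 1 := by
    rw [← ENNReal.ofReal_natCast N, ← ENNReal.ofReal_mul (Nat.cast_nonneg N)]
    rw [mul_inv_cancel₀ hNr.ne', ENNReal.ofReal_one]
  rw [this, one_mul]


lemma periodic_iterate (C : Set ℝ) (q : ℕ) (hper : ∀ z:ℝ, z + 1/q ∈ C ↔ z ∈ C) :
    ∀ (i : ℕ) (z : ℝ), z + (i:ℝ)/q ∈ C ↔ z ∈ C := by
  intro i
  induction i with
  | zero => simp
  | succ i ih =>
    intro z
    have h : z + ((i+1:ℕ):ℝ)/q = (z + (i:ℝ)/q) + 1/q := by push_cast; ring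
    rw [h, hper, ih]

lemma periodic_cell (C : Set ℝ) (q : ℕ) (hq : 0 < q)
    (hper : ∀ z:ℝ, z + 1/q ∈ C ↔ z ∈ C) (i : ℕ) :
    volume (C ∩ Set.Ico ((i:ℝ)/q) (((i:ℝ)+1)/q)) = volume (C ∩ Set.Ico 0 (1/q)) := by
  have hqr : (0:ℝ) < q := by exact_mod_cast hq
  have hset : (fun z => (i:ℝ)/q + z) ⁻¹' (C ∩ Set.Ico ((i:ℝ)/q) (((i:ℝ)+1)/q))
      = C ∩ Set.Ico 0 (1/q) := by
    ext z
    simp only [Set.mem_preimage, Set.mem_inter_iff, Set.mem_Ico]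
    have hd : ((i:ℝ)+1)/q = (i:ℝ)/q + 1/q := by ring
    constructor
    · rintro ⟨hC', h1, h2⟩
      refine ⟨?_, by linarith, by linarith⟩
      · rw [← periodic_iterate C q hper i z]
        have : z + (i:ℝ)/q = (i:ℝ)/q + z := by ring
        rw [this]; exact hC'
    · rintro ⟨hC', h1, h2⟩
      refine ⟨?_, by linarith, by linarith⟩
      · have : (i:ℝ)/q + z = z + (i:ℝ)/q := by ring
        rw [this, periodic_iterate C q hper i z]; exact hC'
  rw [← hset, measure_preimage_add]

lemma periodic_count (C : Set ℝ) (hC : MeasurableSet C) (q : ℕ) (hq : 0 < q)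
    (hper : ∀ z:ℝ, z + 1/q ∈ C ↔ z ∈ C) (u v : ℕ) (huv : u ≤ v) :
    volume (C ∩ Set.Ico ((u:ℝ)/q) ((v:ℝ)/q))
      = ((v - u : ℕ) : ENNReal) * volume (C ∩ Set.Ico 0 (1/q)) := by
  rw [partition C hC q hq u v huv,
    Finset.sum_congr rfl (fun i _ => periodic_cell C q hq hper i), Finset.sum_const,
    Nat.card_Ico, nsmul_eq_mul]

lemma fract_shift (b g : ℕ) (t : ℝ) :
    Int.fract ((b:ℝ)^g * t) = Int.fract ((b:ℝ)^g * Int.fract t) := by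
  conv_lhs => rw [← Int.floor_add_fract t]
  rw [mul_add]
  have h : (b:ℝ)^g * (⌊t⌋:ℝ) = (((b^g : ℕ) : ℤ) * ⌊t⌋ : ℤ) := by push_cast; ring
  rw [h, add_comm, Int.fract_add_intCast]

lemma core (b m : ℕ) (hb : 2 ≤ b) (hm : 1 ≤ m) (hmb : m < b)
    (hOdd : ¬ 2 ∣ b → ¬ 2 ∣ m) (k : ℕ) (hk : 1 ≤ k) :
    ∀ (s : ℕ) (A : Finset ℕ), A.card = s →
      (∀ a ∈ A, ∀ c ∈ A, a < c → a + k + 1 ≤ c) →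
      volume {y ∈ Set.Ioo (0:ℝ) 1 | ∀ l ∈ A, Int.fract ((b:ℝ)^l * y) ∈
          Set.Ioo ((1 - ((m:ℝ)/b)^k)/2) ((1 + ((m:ℝ)/b)^k)/2)}
        = ENNReal.ofReal (((m:ℝ)/b)^(k*s)) := by
  have hbr : (0:ℝ) < b := by positivity
  set τ : ℝ := (m:ℝ)/b with hτdef
  have hτ0 : 0 < τ := by positivity
  have hτ1 : τ < 1 := by
    rw [hτdef, div_lt_one hbr]; exact_mod_cast hmb
  have hτk1 : τ^k ≤ 1 := pow_le_one₀ hτ0.le hτ1.le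
  have hτk0 : 0 < τ^k := by positivity
  set J : Set ℝ := Set.Ioo ((1 - τ^k)/2) ((1 + τ^k)/2) with hJdef
  have hJsub : J ⊆ Set.Ico 0 1 := by
    rintro z ⟨h1, h2⟩; exact ⟨by linarith, by linarith⟩
  intro s
  induction s with
  | zero =>
    intro A hA _
    have hAe : A = ∅ := Finset.card_eq_zero.mp hA
    subst hAe
    have : {y ∈ Set.Ioo (0:ℝ) 1 | ∀ l ∈ (∅ : Finset ℕ), Int.fract ((b:ℝ)^l * y) ∈ J}
        = Set.Ioo (0:ℝ) 1 := by ext y; simp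
    rw [this]
    simp [Real.volume_Ioo]
  | succ s ih =>
    intro A hA hsp
    have hne : A.Nonempty := Finset.card_pos.mp (by omega)
    set m₀ := A.min' hne with hm₀def
    have hm₀A : m₀ ∈ A := A.min'_mem hne
    set A' := A.erase m₀ with hA'def
    have hA'mem : ∀ l ∈ A', m₀ + k + 1 ≤ l := by
      intro l hl
      have hlA : l ∈ A := Finset.mem_of_mem_erase hl
      have hlne : l ≠ m₀ := Finset.ne_of_mem_erase hl
      exact hsp m₀ hm₀A l hlA (lt_of_le_of_ne (A.min'_le l hlA) (Ne.symm hlne))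
    set A'' := A'.image (fun l => l - m₀) with hA''def
    have hA''mem : ∀ j ∈ A'', k + 1 ≤ j := by
      intro j hj
      obtain ⟨l, hl, rfl⟩ := Finset.mem_image.mp hj
      have := hA'mem l hl; omega
    have hcard'' : A''.card = s := by
      have hinj : Set.InjOn (fun l => l - m₀) A' := by
        intro x hx y hy hxy
        have hx' := hA'mem x (by exact_mod_cast hx)
        have hy' := hA'mem y (by exact_mod_cast hy)
        simp only at hxy
        omega
      rw [hA''def, Finset.card_image_of_injOn hinj, hA'def,
        Finset.card_erase_of_mem hm₀A, hA]
      omega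
    have hsp'' : ∀ a ∈ A'', ∀ c ∈ A'', a < c → a + k + 1 ≤ c := by
      intro a ha c hc hac
      obtain ⟨la, hla, rfl⟩ := Finset.mem_image.mp ha
      obtain ⟨lc, hlc, rfl⟩ := Finset.mem_image.mp hc
      have h1 := hA'mem la hla
      have h2 := hA'mem lc hlc
      have h3 : la < lc := by omega
      have := hsp la (Finset.mem_of_mem_erase hla) lc (Finset.mem_of_mem_erase hlc) h3
      omega
    set C := {z : ℝ | ∀ j ∈ A'', Int.fract ((b:ℝ)^j * z) ∈ J} with hCdef
    have hCmeas : MeasurableSet C := by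
      have : C = ⋂ j ∈ A'', (fun z => Int.fract ((b:ℝ)^j * z)) ⁻¹' J := by
        ext z; simp [hCdef]
      rw [this]
      exact MeasurableSet.biInter A''.countable_toSet
        (fun j _ => (measurable_fract.comp (measurable_const_mul _)) measurableSet_Ioo)
    -- step 1 : set identity and L1
    set B := C ∩ J with hBdef
    have hBsub : B ⊆ Set.Ico 0 1 := fun z hz => hJsub hz.2
    have hBmeas : MeasurableSet B := hCmeas.inter measurableSet_Ioo
    have hsetid : {y ∈ Set.Ioo (0:ℝ) 1 | ∀ l ∈ A, Int.fract ((b:ℝ)^l * y) ∈ J}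
        = {y : ℝ | Int.fract (((b^m₀:ℕ):ℝ)*y) ∈ B} ∩ Set.Ioo 0 1 := by
      ext y
      simp only [Set.mem_setOf_eq, Set.mem_inter_iff, Set.mem_sep_iff]
      rw [and_comm (a := y ∈ Set.Ioo (0:ℝ) 1)]
      apply and_congr_left
      intro _
      push_cast
      rw [Set.mem_inter_iff]
      constructor
      · intro hall
        refine ⟨?_, hall m₀ hm₀A⟩
        intro j hj
        obtain ⟨l, hl, rfl⟩ := Finset.mem_image.mp hj
        rw [← fract_shift]
        have hlm : l - m₀ + m₀ = l := by have := hA'mem l hl; omega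
        rw [← mul_assoc, ← pow_add, hlm]
        exact hall l (Finset.mem_of_mem_erase hl)
      · rintro ⟨hC', hJ'⟩ l hl
        rcases eq_or_ne l m₀ with rfl | hne'
        · exact hJ'
        · have hl' : l ∈ A' := Finset.mem_erase.mpr ⟨hne', hl⟩
          have hj : l - m₀ ∈ A'' := Finset.mem_image.mpr ⟨l, hl', rfl⟩
          have := hC' (l - m₀) hj
          rw [← fract_shift] at this
          have hlm : l - m₀ + m₀ = l := by have := hA'mem l hl'; omega
          rw [← mul_assoc, ← pow_add, hlm] at this
          exact this
    rw [hsetid, L1 (b^m₀) (by positivity) B hBsub hBmeas]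
    -- step 2 : grid count for B = C ∩ J
    set q := b^(k+1) with hqdef
    set p := b * m^k with hpdef
    have hq0 : 0 < q := by positivity
    have hqr : (0:ℝ) < q := by exact_mod_cast hq0
    have hpq : p ≤ q := by
      rw [hpdef, hqdef, pow_succ, mul_comm (b^k) b]
      exact Nat.mul_le_mul_left b (Nat.pow_le_pow_left (le_of_lt hmb) k)
    have hpar : 2 ∣ q + p := by
      rcases Nat.even_or_odd b with hbe | hbo
      · have h2b : 2 ∣ b := hbe.two_dvd
        have h1 : 2 ∣ q := by
          rw [hqdef]; exact h2b.trans (dvd_pow_self b (Nat.succ_ne_zero k))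
        have h2 : 2 ∣ p := by rw [hpdef]; exact h2b.mul_right (m^k)
        exact Nat.dvd_add h1 h2
      · have hb2 : b % 2 = 1 := Nat.odd_iff.mp hbo
        have hbodd : ¬ 2 ∣ b := by omega
        have hmodd : Odd m := Nat.odd_iff.mpr (by have := hOdd hbodd; omega)
        have hsum : Even (b^k + m^k) := (hbo.pow).add_odd (hmodd.pow)
        have hqp : q + p = b * (b^k + m^k) := by rw [hqdef, hpdef]; ring
        rw [hqp]
        exact Dvd.dvd.mul_left hsum.two_dvd b
    obtain ⟨E, hE⟩ := hpar
    have hpE : p ≤ E := by omega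
    set em : ℕ := E - p with hemdef
    set ep : ℕ := E with hepdef
    have h2em : 2 * em + p = q := by omega
    have h2ep : 2 * ep = q + p := by omega
    have hqcast : ((q:ℕ):ℝ) = (b:ℝ)^(k+1) := by rw [hqdef]; push_cast; ring
    have hpcast : ((p:ℕ):ℝ) = (b:ℝ) * (m:ℝ)^k := by rw [hpdef]; push_cast; ring
    have hpqτ : ((p:ℕ):ℝ) / ((q:ℕ):ℝ) = τ^k := by
      rw [hqcast, hpcast, hτdef, div_pow, pow_succ]
      field_simp
    have hemcast : ((em:ℕ):ℝ)/q = (1 - τ^k)/2 := by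
      have h : 2 * ((em:ℕ):ℝ) + ((p:ℕ):ℝ) = ((q:ℕ):ℝ) := by exact_mod_cast h2em
      have hq0' : ((q:ℕ):ℝ) ≠ 0 := by positivity
      rw [← hpqτ]
      have h4 : ((em:ℕ):ℝ) = (((q:ℕ):ℝ) - p)/2 := by linarith
      rw [h4, div_div, ← div_self hq0', div_sub_div_same, div_div, mul_comm]
    have hepcast : ((ep:ℕ):ℝ)/q = (1 + τ^k)/2 := by
      have h : 2 * ((ep:ℕ):ℝ) = ((q:ℕ):ℝ) + ((p:ℕ):ℝ) := by exact_mod_cast h2ep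
      have hq0' : ((q:ℕ):ℝ) ≠ 0 := by positivity
      rw [← hpqτ]
      have h4 : ((ep:ℕ):ℝ) = (((q:ℕ):ℝ) + p)/2 := by linarith
      rw [h4, div_div, ← div_self hq0', ← add_div, div_div, mul_comm]
    have hJeq : J = Set.Ioo (((em:ℕ):ℝ)/q) (((ep:ℕ):ℝ)/q) := by
      rw [hJdef, hemcast, hepcast]
    -- periodicity of C
    have key : ∀ j, k+1 ≤ j → ∀ z:ℝ, Int.fract ((b:ℝ)^j*(z+1/q)) = Int.fract ((b:ℝ)^j*z) := by
      intro j hj z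
      have hsplit : (b:ℝ)^j = (b:ℝ)^(j-(k+1)) * (b:ℝ)^(k+1) := by
        rw [← pow_add]; congr 1; omega
      have h1 : (b:ℝ)^j * (z + 1/q) = (b:ℝ)^j*z + (b:ℝ)^(j-(k+1)) := by
        rw [mul_add]
        congr 1
        rw [hsplit, hqcast, mul_one_div, mul_div_assoc,
          div_self (pow_ne_zero _ hbr.ne'), mul_one]
      have h2 : (b:ℝ)^(j-(k+1)) = (((b^(j-(k+1)) : ℕ) : ℤ) : ℝ) := by push_cast; ring
      rw [h1, h2, Int.fract_add_intCast]
    have hper : ∀ z:ℝ, z + 1/(q:ℝ) ∈ C ↔ z ∈ C := by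
      intro z
      simp only [hCdef, Set.mem_setOf_eq]
      constructor
      · intro h j hj
        have := h j hj
        rwa [key j (hA''mem j hj) z] at this
      · intro h j hj
        rw [key j (hA''mem j hj) z]
        exact h j hj
    set w := volume (C ∩ Set.Ico 0 (1/(q:ℝ))) with hwdef
    have hBvol : volume B = (p : ENNReal) * w := by
      rw [hBdef, hJeq, ← vol_inter_Ico_eq_Ioo,
        periodic_count C hCmeas q hq0 hper em ep (by omega)]
      congr 1
      have : ep - em = p := by omega
      rw [this]
    have hIH : volume (C ∩ Set.Ioo 0 1) = ENNReal.ofReal (τ^(k*s)) := by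
      have hCid : C ∩ Set.Ioo 0 1
          = {y ∈ Set.Ioo (0:ℝ) 1 | ∀ l ∈ A'', Int.fract ((b:ℝ)^l * y) ∈ J} := by
        ext y
        simp only [hCdef, Set.mem_inter_iff, Set.mem_setOf_eq, Set.mem_sep_iff]
        tauto
      rw [hCid, ih A'' hcard'' hsp'']
    have hqvol : volume (C ∩ Set.Ioo 0 1) = (q : ENNReal) * w := by
      have h01 : Set.Ioo (0:ℝ) 1 = Set.Ioo (((0:ℕ):ℝ)/q) (((q:ℕ):ℝ)/q) := by
        norm_num [div_self hqr.ne']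
      rw [h01, ← vol_inter_Ico_eq_Ioo,
        periodic_count C hCmeas q hq0 hper 0 q (Nat.zero_le q)]
      norm_num
      rw [hwdef, one_div]
    have hcoef : ENNReal.ofReal (τ^k) * (q : ENNReal) = (p : ENNReal) := by
      rw [← ENNReal.ofReal_natCast q, ← ENNReal.ofReal_mul (by positivity),
        ← ENNReal.ofReal_natCast p]
      congr 1
      rw [← hpqτ]
      field_simp
    calc volume B = (p : ENNReal) * w := hBvol
      _ = ENNReal.ofReal (τ^k) * ((q : ENNReal) * w) := by rw [← mul_assoc, hcoef]
      _ = ENNReal.ofReal (τ^k) * ENNReal.ofReal (τ^(k*s)) := by rw [← hqvol, hIH]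
      _ = ENNReal.ofReal (τ^(k*(s+1))) := by
          rw [← ENNReal.ofReal_mul (by positivity), ← pow_add]
          congr 2
          ring

lemma xiP_iff (δ τ : ℝ) (hδ0 : 0 < δ) (b : ℕ) (hδb : (b:ℝ) * δ = 1) (k l : ℕ) (x : ℝ) :
    xiP δ τ k l x = 1 ↔ Int.fract ((b:ℝ)^l * (1/2 + x)) ∈
      Set.Ioo ((1 - τ^k)/2) ((1 + τ^k)/2) := by
  have hδl : 0 < δ^l := by positivity
  have hbl : (b:ℝ)^l * δ^l = 1 := by rw [← mul_pow, hδb, one_pow]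
  have h1 : xiP δ τ k l x = 1 ↔ |x - ctr δ l x| < τ^k*δ^l/2 := by
    unfold xiP; split_ifs with h <;> simp [h]
  rw [h1]
  set t := (b:ℝ)^l * (1/2 + x) with htdef
  have hδt : δ^l * t = x + 1/2 := by
    rw [htdef, ← mul_assoc, mul_comm (δ^l) ((b:ℝ)^l), hbl, one_mul]; ring
  have hfloor : (x + 1/2)/δ^l = t := by
    rw [← hδt, mul_comm, mul_div_assoc, div_self hδl.ne', mul_one]
  have hctr : x - ctr δ l x = δ^l * (Int.fract t - 1/2) := by
    unfold ctr
    rw [hfloor]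
    have hf : Int.fract t = t - ⌊t⌋ := (Int.self_sub_floor t).symm
    rw [hf]
    linear_combination -hδt
  rw [hctr, abs_mul, abs_of_pos hδl]
  have h2 : τ^k*δ^l/2 = δ^l * (τ^k/2) := by ring
  rw [h2, mul_lt_mul_iff_right₀ hδl, abs_lt, Set.mem_Ioo]
  constructor
  · rintro ⟨ha, hb'⟩; constructor <;> linarith
  · rintro ⟨ha, hb'⟩; constructor <;> linarith

lemma bridge (δ τ : ℝ) (hδ0 : 0 < δ) (hδ1 : δ < 1) (hτ0 : 0 < τ) (hτ1 : τ < 1)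
    (b M mm : ℕ) (hδb : (b:ℝ) * δ = 1) (hMτ : (M:ℝ) * τ = 1) (hmδ : (mm:ℝ) * δ = τ)
    (k : ℕ) (hk : 1 ≤ k) (A : Finset ℕ)
    (hsp : ∀ a ∈ A, ∀ c ∈ A, a < c → a + k + 1 ≤ c) :
    volume {x ∈ Set.Ioo (-(1/2):ℝ) (1/2) | ∀ l ∈ A, xiP δ τ k l x = 1}
      = ENNReal.ofReal (τ ^ (k * A.card)) := by
  have hbr : (0:ℝ) < b := by
    rcases Nat.eq_zero_or_pos b with h | h
    · exfalso; rw [h] at hδb; norm_num at hδb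
    · exact_mod_cast h
  have hδinv : δ = (b:ℝ)⁻¹ := eq_inv_of_mul_eq_one_right hδb
  have hmm : (0:ℝ) < mm := by
    rcases Nat.eq_zero_or_pos mm with h | h
    · exfalso; rw [h] at hmδ; norm_num at hmδ; linarith
    · exact_mod_cast h
  have hτeq : τ = (mm:ℝ)/(b:ℝ) := by rw [← hmδ, hδinv, div_eq_mul_inv]
  have hb2 : 2 ≤ b := by
    by_contra h
    interval_cases b
    · norm_num at hδb
    · norm_num at hδb; linarith
  have hm1 : 1 ≤ mm := by exact_mod_cast hmm
  have hmb : mm < b := by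
    have h : (mm:ℝ) < b := by
      rw [hτeq, div_lt_one hbr] at hτ1; exact hτ1
    exact_mod_cast h
  have hMmb : M * mm = b := by
    have h1 : (M:ℝ)*mm*δ = (b:ℝ)*δ := by rw [mul_assoc, hmδ, hMτ, hδb]
    have h2 : ((M*mm:ℕ):ℝ) = ((b:ℕ):ℝ) := by
      push_cast; exact mul_right_cancel₀ hδ0.ne' h1
    exact_mod_cast h2
  have hOdd : ¬ 2 ∣ b → ¬ 2 ∣ mm := by
    intro hb h2m
    exact hb (hMmb ▸ h2m.mul_left M)
  set J := Set.Ioo ((1 - τ^k)/2) ((1 + τ^k)/2) with hJ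
  have hpre : {x ∈ Set.Ioo (-(1/2):ℝ) (1/2) | ∀ l ∈ A, xiP δ τ k l x = 1}
      = (fun x => (1:ℝ)/2 + x) ⁻¹' {y ∈ Set.Ioo (0:ℝ) 1 | ∀ l ∈ A, Int.fract ((b:ℝ)^l * y) ∈ J} := by
    ext x
    simp only [Set.mem_preimage, Set.mem_sep_iff, Set.mem_Ioo]
    constructor
    · rintro ⟨⟨hx1, hx2⟩, hall⟩
      refine ⟨⟨by linarith, by linarith⟩, ?_⟩
      intro l hl
      exact (xiP_iff δ τ hδ0 b hδb k l x).mp (hall l hl)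
    · rintro ⟨⟨hy1, hy2⟩, hall⟩
      refine ⟨⟨by linarith, by linarith⟩, ?_⟩
      intro l hl
      exact (xiP_iff δ τ hδ0 b hδb k l x).mpr (hall l hl)
  rw [hpre, measure_preimage_add]
  have hc := core b mm hb2 hm1 hmb hOdd k hk A.card A rfl hsp
  rw [← hτeq] at hc
  exact hc

lemma extraction (k : ℕ) : ∀ (s : ℕ) (S : Finset ℕ), s*(k+1) ≤ S.card + k →
    ∃ A : Finset ℕ, A ⊆ S ∧ A.card = s ∧ (∀ a ∈ A, ∀ c ∈ A, a < c → a + k + 1 ≤ c) := by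
  intro s
  induction s with
  | zero => intro S _; exact ⟨∅, by simp, by simp, by simp⟩
  | succ s ih =>
    intro S hcard
    have hex : (s+1)*(k+1) = s*(k+1) + (k+1) := by ring
    have hne : S.Nonempty := by
      rw [← Finset.card_pos]
      have h2 : 1 ≤ s*(k+1) + (k+1) := by omega
      omega
    set m₀ := S.min' hne with hm₀
    set S' := S.filter (fun l => m₀ + k + 1 ≤ l) with hS'
    have hsub : S' ⊆ S := Finset.filter_subset _ _
    have hcard' : S.card ≤ S'.card + (k+1) := by
      have hsplit := Finset.card_filter_add_card_filter_not
        (s := S) (p := fun l => m₀ + k + 1 ≤ l)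
      have hsubIcc : S.filter (fun l => ¬ (m₀ + k + 1 ≤ l)) ⊆ Finset.Icc m₀ (m₀ + k) := by
        intro l hl
        rw [Finset.mem_filter] at hl
        rw [Finset.mem_Icc]
        exact ⟨S.min'_le l hl.1, by omega⟩
      have hcc := Finset.card_le_card hsubIcc
      rw [Nat.card_Icc] at hcc
      have hfc : (Finset.filter (fun l => m₀ + k + 1 ≤ l) S).card = S'.card := by rw [hS']
      omega
    have h1 : s*(k+1) + (k+1) ≤ S.card + k := by rw [← hex]; exact hcard
    obtain ⟨A', hA'sub, hA'card, hA'sp⟩ := ih S' (by omega)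
    have hA'S : ∀ a ∈ A', m₀ + k + 1 ≤ a := by
      intro a ha
      have := hA'sub ha
      rw [hS', Finset.mem_filter] at this
      exact this.2
    refine ⟨insert m₀ A', ?_, ?_, ?_⟩
    · intro a ha
      rcases Finset.mem_insert.mp ha with rfl | ha'
      · exact S.min'_mem hne
      · exact hsub (hA'sub ha')
    · rw [Finset.card_insert_of_notMem, hA'card]
      intro hmem
      have := hA'S m₀ hmem
      omega
    · intro a ha c hc hac
      rcases Finset.mem_insert.mp ha with rfl | ha' <;>
        rcases Finset.mem_insert.mp hc with rfl | hc'
      · omega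
      · have := hA'S c hc'; omega
      · have := hA'S a ha'; omega
      · exact hA'sp a ha' c hc' hac

lemma count_bound (δ τ : ℝ) (hδ0 : 0 < δ) (hδ1 : δ < 1) (hτ0 : 0 < τ) (hτ1 : τ < 1)
    (b M mm : ℕ) (hδb : (b:ℝ) * δ = 1) (hMτ : (M:ℝ) * τ = 1) (hmδ : (mm:ℝ) * δ = τ)
    (kk : ℕ) (hkk : 1 ≤ kk) (n r s : ℕ) (hrs : s*(kk+1) ≤ r + kk) :
    volume {x ∈ Set.Ioo (-(1/2):ℝ) (1/2) | (r:ℝ) ≤ Dkn δ τ kk n x}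
      ≤ (n.choose s : ENNReal) * ENNReal.ofReal (τ^(kk*s)) := by
  set 𝒜 := ((Finset.Icc 1 n).powersetCard s).filter
    (fun A => ∀ a ∈ A, ∀ c ∈ A, a < c → a + kk + 1 ≤ c) with h𝒜
  have hsub : {x ∈ Set.Ioo (-(1/2):ℝ) (1/2) | (r:ℝ) ≤ Dkn δ τ kk n x}
      ⊆ ⋃ A ∈ 𝒜, {x ∈ Set.Ioo (-(1/2):ℝ) (1/2) | ∀ l ∈ A, xiP δ τ kk l x = 1} := by
    rintro x ⟨hxI, hxD⟩
    letI : DecidablePred (fun l => xiP δ τ kk l x = 1) := fun l => Classical.propDecidable _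
    set L := (Finset.Icc 1 n).filter (fun l => xiP δ τ kk l x = 1) with hL
    have hDval : Dkn δ τ kk n x = (L.card : ℝ) := by
      rw [hL, Finset.card_filter]
      unfold Dkn
      push_cast
      apply Finset.sum_congr rfl
      intro l _
      by_cases h : |x - ctr δ l x| < τ^kk * δ^l / 2
      · have h1 : xiP δ τ kk l x = 1 := by unfold xiP; rw [if_pos h]
        simp [h1]
      · have h1 : xiP δ τ kk l x = 0 := by unfold xiP; rw [if_neg h]
        simp [h1]
    have hrL : r ≤ L.card := by
      rw [hDval] at hxD; exact_mod_cast hxD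
    obtain ⟨A, hAL, hAcard, hAsp⟩ := extraction kk s L (by omega)
    refine Set.mem_iUnion₂.mpr ⟨A, ?_, hxI, ?_⟩
    · rw [h𝒜, Finset.mem_filter]
      exact ⟨Finset.mem_powersetCard.mpr ⟨hAL.trans (Finset.filter_subset _ _), hAcard⟩, hAsp⟩
    · intro l hl
      have := hAL hl
      rw [hL, Finset.mem_filter] at this
      exact this.2
  calc volume {x ∈ Set.Ioo (-(1/2):ℝ) (1/2) | (r:ℝ) ≤ Dkn δ τ kk n x}
      ≤ volume (⋃ A ∈ 𝒜, {x ∈ Set.Ioo (-(1/2):ℝ) (1/2) | ∀ l ∈ A, xiP δ τ kk l x = 1}) :=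
        measure_mono hsub
    _ ≤ ∑ A ∈ 𝒜, volume {x ∈ Set.Ioo (-(1/2):ℝ) (1/2) | ∀ l ∈ A, xiP δ τ kk l x = 1} :=
        measure_biUnion_finset_le 𝒜 _
    _ = ∑ A ∈ 𝒜, ENNReal.ofReal (τ^(kk*s)) := by
        apply Finset.sum_congr rfl
        intro A hA
        rw [h𝒜, Finset.mem_filter] at hA
        have hcard : A.card = s := (Finset.mem_powersetCard.mp hA.1).2
        rw [bridge δ τ hδ0 hδ1 hτ0 hτ1 b M mm hδb hMτ hmδ kk hkk A hA.2, hcard]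
    _ = (𝒜.card : ENNReal) * ENNReal.ofReal (τ^(kk*s)) := by
        rw [Finset.sum_const, nsmul_eq_mul]
    _ ≤ (n.choose s : ENNReal) * ENNReal.ofReal (τ^(kk*s)) := by
        apply mul_le_mul_left
        have h1 : 𝒜.card ≤ ((Finset.Icc 1 n).powersetCard s).card :=
          Finset.card_filter_le _ _
        rw [Finset.card_powersetCard, Nat.card_Icc] at h1
        simp only [Nat.add_sub_cancel] at h1
        exact_mod_cast h1

lemma pow_self_le (s : ℕ) : (s:ℝ)^s ≤ (s.factorial : ℝ) * Real.exp 1 ^ s := by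
  induction s with
  | zero => simp
  | succ s ih =>
    have hstep : ((s:ℝ)+1)^s ≤ (s:ℝ)^s * Real.exp 1 := by
      rcases Nat.eq_zero_or_pos s with rfl | hs
      · have := Real.add_one_le_exp 1
        simp only [Nat.cast_zero, pow_zero, zero_add, one_pow]
        norm_num
      · have hsr : (0:ℝ) < s := by exact_mod_cast hs
        have ha := Real.add_one_le_exp (1/(s:ℝ))
        have h1 : (s:ℝ) + 1 ≤ s * Real.exp (1/s) := by
          have h2 : (s:ℝ)+1 = s * (1/s + 1) := by field_simp; ring
          rw [h2]
          exact mul_le_mul_of_nonneg_left ha hsr.le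
        have h2 : ((s:ℝ)+1)^s ≤ ((s:ℝ) * Real.exp (1/s))^s :=
          pow_le_pow_left₀ (by positivity) h1 s
        rw [mul_pow, ← Real.exp_nat_mul] at h2
        have h3 : (s:ℝ) * (1/s) = 1 := by field_simp
        rwa [h3] at h2
    have hcast : ((s+1:ℕ):ℝ) = (s:ℝ)+1 := by push_cast; ring
    rw [hcast]
    calc ((s:ℝ)+1)^(s+1) = ((s:ℝ)+1)^s * ((s:ℝ)+1) := by ring
      _ ≤ ((s:ℝ)^s * Real.exp 1) * ((s:ℝ)+1) :=
          mul_le_mul_of_nonneg_right hstep (by positivity)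
      _ ≤ (((s.factorial:ℝ) * Real.exp 1 ^ s) * Real.exp 1) * ((s:ℝ)+1) := by
          apply mul_le_mul_of_nonneg_right
            (mul_le_mul_of_nonneg_right ih (Real.exp_pos 1).le) (by positivity)
      _ = ((s+1).factorial : ℝ) * Real.exp 1 ^ (s+1) := by
          rw [Nat.factorial_succ]; push_cast; ring

lemma perk (τ : ℝ) (hτ0 : 0 < τ) (hτb : τ * 2^60 ≤ 1) (kk s n : ℕ)
    (hkk : 1 ≤ kk) (hs : 1 ≤ s) (hn : 1 ≤ n) (hns : (n:ℝ) ≤ (s:ℝ) * 2^(kk+3)) :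
    (n.choose s : ℝ) * τ^(kk*s) * ((n:ℝ)^2 * 2^kk) ≤ Real.sqrt τ := by
  have hsr : (0:ℝ) < s := by exact_mod_cast hs
  have hnr : (0:ℝ) < n := by exact_mod_cast hn
  have hτle : τ ≤ ((2:ℝ)^60)⁻¹ := by
    rw [← one_div, le_div_iff₀ (by positivity)]; linarith
  have he4 : Real.exp 1 ≤ 4 := by
    have := Real.exp_one_lt_d9; linarith
  have hcf : (n.choose s : ℝ) * (s.factorial:ℝ) ≤ (n:ℝ)^s := by
    have h2 : n.choose s * s.factorial = n.descFactorial s := by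
      rw [Nat.choose_eq_descFactorial_div_factorial,
        Nat.div_mul_cancel (Nat.factorial_dvd_descFactorial n s)]
    have h3 : n.choose s * s.factorial ≤ n^s := h2 ▸ Nat.descFactorial_le_pow n s
    exact_mod_cast h3
  have h1 : (n.choose s : ℝ) * (s:ℝ)^s ≤ (n:ℝ)^s * Real.exp 1 ^ s := by
    calc (n.choose s:ℝ) * (s:ℝ)^s
        ≤ (n.choose s:ℝ) * ((s.factorial:ℝ) * Real.exp 1 ^ s) :=
          mul_le_mul_of_nonneg_left (pow_self_le s) (Nat.cast_nonneg _)
      _ = ((n.choose s:ℝ) * s.factorial) * Real.exp 1 ^ s := by ring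
      _ ≤ (n:ℝ)^s * Real.exp 1 ^ s := mul_le_mul_of_nonneg_right hcf (by positivity)
  have h2 : (n:ℝ)^s ≤ ((s:ℝ))^s * ((2:ℝ)^(kk+3))^s := by
    rw [← mul_pow]; exact pow_le_pow_left₀ hnr.le hns s
  have hss : (0:ℝ) < (s:ℝ)^s := by positivity
  have hchoose : (n.choose s : ℝ) ≤ ((2:ℝ)^(kk+5))^s := by
    have h25 : (2:ℝ)^(kk+5) = 2^(kk+3)*4 := by rw [pow_add, pow_add]; ring
    have h4 : (n.choose s:ℝ) * (s:ℝ)^s ≤ ((2:ℝ)^(kk+5))^s * (s:ℝ)^s := by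
      calc (n.choose s:ℝ) * (s:ℝ)^s ≤ (n:ℝ)^s * Real.exp 1 ^ s := h1
        _ ≤ ((s:ℝ)^s * ((2:ℝ)^(kk+3))^s) * Real.exp 1 ^ s :=
            mul_le_mul_of_nonneg_right h2 (by positivity)
        _ ≤ ((s:ℝ)^s * ((2:ℝ)^(kk+3))^s) * 4^s := by
            apply mul_le_mul_of_nonneg_left ?_ (by positivity)
            exact pow_le_pow_left₀ (Real.exp_pos 1).le he4 s
        _ = ((2:ℝ)^(kk+5))^s * (s:ℝ)^s := by
            rw [h25, mul_pow]; ring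
    exact le_of_mul_le_mul_right h4 hss
  have hn2 : (n:ℝ)^2 ≤ (4:ℝ)^s * (2:ℝ)^(2*kk+6) := by
    have h5 : (n:ℝ)^2 ≤ ((s:ℝ))^2 * ((2:ℝ)^(kk+3))^2 := by
      rw [← mul_pow]; exact pow_le_pow_left₀ hnr.le hns 2
    have h6 : (s:ℝ)^2 ≤ (4:ℝ)^s := by
      have h7 : s < 2^s := Nat.lt_two_pow_self
      have h8 : (s:ℝ) ≤ (2:ℝ)^s := by exact_mod_cast h7.le
      calc (s:ℝ)^2 ≤ ((2:ℝ)^s)^2 := pow_le_pow_left₀ (Nat.cast_nonneg _) h8 2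
        _ = (4:ℝ)^s := by
            rw [← pow_mul, mul_comm s 2, pow_mul]; norm_num
    calc (n:ℝ)^2 ≤ ((s:ℝ))^2 * ((2:ℝ)^(kk+3))^2 := h5
      _ ≤ (4:ℝ)^s * ((2:ℝ)^(kk+3))^2 := mul_le_mul_of_nonneg_right h6 (by positivity)
      _ = (4:ℝ)^s * (2:ℝ)^(2*kk+6) := by rw [← pow_mul]; ring_nf
  have hτp : (0:ℝ) ≤ τ^(kk*s) := by positivity
  have hcomb : (n.choose s : ℝ) * τ^(kk*s) * ((n:ℝ)^2 * 2^kk)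
      ≤ ((2:ℝ)^(kk+7))^s * (2:ℝ)^(3*kk+6) * τ^(kk*s) := by
    have hA : (n.choose s : ℝ) * ((n:ℝ)^2 * 2^kk)
        ≤ ((2:ℝ)^(kk+5))^s * (((4:ℝ)^s * (2:ℝ)^(2*kk+6)) * 2^kk) := by
      apply mul_le_mul hchoose ?_ (by positivity) (by positivity)
      exact mul_le_mul_of_nonneg_right hn2 (by positivity)
    have hB : ((2:ℝ)^(kk+5))^s * (((4:ℝ)^s * (2:ℝ)^(2*kk+6)) * 2^kk)
        = ((2:ℝ)^(kk+7))^s * (2:ℝ)^(3*kk+6) := by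
      have h47 : (2:ℝ)^(kk+7) = 2^(kk+5)*4 := by rw [pow_add, pow_add]; ring
      have h36 : (2:ℝ)^(3*kk+6) = 2^(2*kk+6) * 2^kk := by rw [← pow_add]; ring_nf
      rw [h47, mul_pow, h36]; ring
    calc (n.choose s : ℝ) * τ^(kk*s) * ((n:ℝ)^2 * 2^kk)
        = ((n.choose s : ℝ) * ((n:ℝ)^2 * 2^kk)) * τ^(kk*s) := by ring
      _ ≤ (((2:ℝ)^(kk+5))^s * (((4:ℝ)^s * (2:ℝ)^(2*kk+6)) * 2^kk)) * τ^(kk*s) :=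
          mul_le_mul_of_nonneg_right hA hτp
      _ = ((2:ℝ)^(kk+7))^s * (2:ℝ)^(3*kk+6) * τ^(kk*s) := by rw [hB]
  have hks1 : 1 ≤ kk*s := Nat.one_le_iff_ne_zero.mpr (by positivity)
  set u := kk*s - 1 with hu
  have hu1 : kk*s = u + 1 := by omega
  have hsqle : Real.sqrt τ ≤ ((2:ℝ)^30)⁻¹ := by
    have h9 : Real.sqrt τ ≤ Real.sqrt (((2:ℝ)^60)⁻¹) := Real.sqrt_le_sqrt hτle
    have h10 : ((2:ℝ)^60)⁻¹ = (((2:ℝ)^30)^2)⁻¹ := by rw [← pow_mul]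
    rw [h10, Real.sqrt_inv, Real.sqrt_sq (by positivity)] at h9
    exact h9
  have hpowineq : ((2:ℝ)^(kk+7))^s * (2:ℝ)^(3*kk+6) ≤ (2:ℝ)^30 * ((2:ℝ)^60)^u := by
    rw [← pow_mul, ← pow_add, ← pow_mul, ← pow_add]
    apply pow_le_pow_right₀ one_le_two
    have h10 : (kk+7)*s ≤ 8*(kk*s) := by nlinarith
    have hPk : kk ≤ kk*s := Nat.le_mul_of_pos_right kk hs
    omega
  have hfin : ((2:ℝ)^(kk+7))^s * (2:ℝ)^(3*kk+6) * τ^(kk*s) ≤ Real.sqrt τ := by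
    calc ((2:ℝ)^(kk+7))^s * (2:ℝ)^(3*kk+6) * τ^(kk*s)
        ≤ ((2:ℝ)^30 * ((2:ℝ)^60)^u) * τ^(kk*s) :=
          mul_le_mul_of_nonneg_right hpowineq hτp
      _ = ((2:ℝ)^30 * τ) * (((2:ℝ)^60)^u * τ^u) := by rw [hu1, pow_succ]; ring
      _ ≤ ((2:ℝ)^30 * τ) * 1 := by
          apply mul_le_mul_of_nonneg_left ?_ (by positivity)
          rw [← mul_pow]
          apply pow_le_one₀ (by positivity)
          linarith [hτb]
      _ = (2:ℝ)^30 * (Real.sqrt τ * Real.sqrt τ) := by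
          rw [Real.mul_self_sqrt hτ0.le, mul_one]
      _ = ((2:ℝ)^30 * Real.sqrt τ) * Real.sqrt τ := by ring
      _ ≤ 1 * Real.sqrt τ := by
          apply mul_le_mul_of_nonneg_right ?_ (Real.sqrt_nonneg τ)
          calc (2:ℝ)^30 * Real.sqrt τ ≤ (2:ℝ)^30 * ((2:ℝ)^30)⁻¹ :=
                mul_le_mul_of_nonneg_left hsqle (by positivity)
            _ = 1 := by norm_num
      _ = Real.sqrt τ := one_mul _
  exact le_trans hcomb hfin

lemma Dkn_nat (δ τ : ℝ) (kk n : ℕ) (x : ℝ) : ∃ c:ℕ, Dkn δ τ kk n x = (c:ℝ) := by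
  letI : DecidablePred (fun l => xiP δ τ kk l x = 1) := fun l => Classical.propDecidable _
  refine ⟨((Finset.Icc 1 n).filter (fun l => xiP δ τ kk l x = 1)).card, ?_⟩
  rw [Finset.card_filter]
  unfold Dkn
  push_cast
  apply Finset.sum_congr rfl
  intro l _
  by_cases h : |x - ctr δ l x| < τ^kk * δ^l / 2
  · have h1 : xiP δ τ kk l x = 1 := by unfold xiP; rw [if_pos h]
    simp [h1]
  · have h1 : xiP δ τ kk l x = 0 := by unfold xiP; rw [if_neg h]
    simp [h1]

lemma Dkn_nonneg (δ τ : ℝ) (kk n : ℕ) (x : ℝ) : 0 ≤ Dkn δ τ kk n x := by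
  unfold Dkn
  apply Finset.sum_nonneg
  intro l _
  unfold xiP
  split_ifs <;> norm_num

lemma tsum_g (n : ℕ) :
    Summable (fun k:ℕ => ((k:ℝ)+1) * n / 2^(k+3)) ∧
    ∑' k:ℕ, (((k:ℝ)+1) * n / 2^(k+3)) = n/2 := by
  have hhalf : ‖(1/2 : ℝ)‖ < 1 := by rw [Real.norm_eq_abs]; rw [abs_of_pos] <;> norm_num
  have hs1 : Summable (fun k:ℕ => (k:ℝ) * (1/2:ℝ)^k) := by
    have h := summable_pow_mul_geometric_of_norm_lt_one 1 hhalf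
    simpa using h
  have hs2 : Summable (fun k:ℕ => (1/2:ℝ)^k) :=
    summable_geometric_of_lt_one (by norm_num) (by norm_num)
  have hfe : (fun k:ℕ => ((k:ℝ)+1) * n / 2^(k+3))
      = fun k : ℕ => ((n:ℝ)/8) * ((k:ℝ)*(1/2:ℝ)^k + (1/2:ℝ)^k) := by
    funext k
    have h2k : (2:ℝ)^(k+3) = 2^k * 8 := by rw [pow_add]; norm_num
    have h12 : (1/2:ℝ)^k = ((2:ℝ)^k)⁻¹ := by
      rw [one_div, inv_pow]
    rw [h2k, h12]
    have h2kpos : (0:ℝ) < 2^k := by positivity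
    field_simp
  have hsum : Summable (fun k:ℕ => ((k:ℝ)+1) * n / 2^(k+3)) := by
    rw [hfe]; exact (hs1.add hs2).mul_left _
  refine ⟨hsum, ?_⟩
  rw [hfe, tsum_mul_left, Summable.tsum_add hs1 hs2,
    tsum_coe_mul_geometric_of_norm_lt_one hhalf,
    tsum_geometric_of_lt_one (by norm_num) (by norm_num)]
  norm_num
  ring

end St14

/-- There exist τ₀ ∈ (0,1) and C : (0,τ₀) → (0,∞) with C(τ) → 0 as
τ → 0, such that whenever τ ∈ (0,τ₀) and δ ∈ (0,1) satisfy 1/δ ∈ ℕ, 1/τ ∈ ℕ and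
τ/δ ∈ ℕ, then for every n ≥ 1 the measure of E_n = {x ∈ I : D_n(x) ≥ n/2} is at
most C(τ)/n². -/
theorem statement14 :
    ∃ τ₀ ∈ Set.Ioo (0 : ℝ) 1, ∃ C : ℝ → ℝ,
      Filter.Tendsto C (nhdsWithin 0 (Set.Ioi 0)) (nhds 0) ∧
      (∀ τ ∈ Set.Ioo (0 : ℝ) τ₀, 0 < C τ) ∧
      (∀ τ ∈ Set.Ioo (0 : ℝ) τ₀, ∀ δ ∈ Set.Ioo (0 : ℝ) 1,
        (∃ m : ℕ, (m : ℝ) * δ = 1) → (∃ m : ℕ, (m : ℝ) * τ = 1) →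
        (∃ m : ℕ, (m : ℝ) * δ = τ) →
        ∀ n : ℕ, 1 ≤ n →
          volume {x ∈ Set.Ioo (-(1 / 2) : ℝ) (1 / 2) | (n : ℝ) / 2 ≤ Dn δ τ n x}
            ≤ ENNReal.ofReal (C τ / n ^ 2)) := by
  refine ⟨((2:ℝ)^60)⁻¹, ⟨by positivity, by norm_num⟩, Real.sqrt, ?_, ?_, ?_⟩
  · have h : Filter.Tendsto Real.sqrt (nhds 0) (nhds 0) := by
      have h2 := Real.continuous_sqrt.tendsto 0
      rwa [Real.sqrt_zero] at h2
    exact h.mono_left nhdsWithin_le_nhds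
  · exact fun τ hτ => Real.sqrt_pos.mpr hτ.1
  rintro τ ⟨hτ0, hτup⟩ δ ⟨hδ0, hδ1⟩ ⟨b, hδb⟩ ⟨M, hMτ⟩ ⟨mm, hmδ⟩ n hn
  have hτ1 : τ < 1 := lt_trans hτup (by norm_num)
  have hτb : τ * 2^60 ≤ 1 := by
    calc τ * 2^60 ≤ ((2:ℝ)^60)⁻¹ * 2^60 :=
          mul_le_mul_of_nonneg_right hτup.le (by positivity)
      _ = 1 := by norm_num
  have hnn : (0:ℝ) < n := by exact_mod_cast hn
  set rr : ℕ → ℕ := fun kk => ⌈(kk:ℝ)*n/2^(kk+2)⌉₊ with hrr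
  set ss : ℕ → ℕ := fun kk => ⌈(rr kk : ℝ)/((kk:ℝ)+1)⌉₊ with hss
  set F : ℕ → Set ℝ := fun kk =>
    {x ∈ Set.Ioo (-(1 / 2) : ℝ) (1 / 2) | ((rr kk : ℕ):ℝ) ≤ Dkn δ τ kk n x} with hF
  have hkkpos : ∀ kk:ℕ, 1 ≤ kk → (0:ℝ) < kk := fun kk h => by exact_mod_cast h
  have hrpos : ∀ kk, 1 ≤ kk → 1 ≤ rr kk := by
    intro kk h
    have := hkkpos kk h
    exact Nat.one_le_iff_ne_zero.mpr (Nat.ceil_pos.mpr (by positivity)).ne'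
  have hspos : ∀ kk, 1 ≤ kk → 1 ≤ ss kk := by
    intro kk h
    have h1 : (0:ℝ) < (rr kk : ℝ) := by
      have := hrpos kk h; exact_mod_cast this
    exact Nat.one_le_iff_ne_zero.mpr (Nat.ceil_pos.mpr (by positivity)).ne'
  have hrs : ∀ kk, 1 ≤ kk → ss kk * (kk+1) ≤ rr kk + kk := by
    intro kk h
    have h1 : ((ss kk):ℝ) < (rr kk : ℝ)/((kk:ℝ)+1) + 1 :=
      Nat.ceil_lt_add_one (by positivity)
    have h2 : ((ss kk):ℝ) * ((kk:ℝ)+1) < (rr kk:ℝ) + ((kk:ℝ)+1) := by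
      have hkp : (0:ℝ) < (kk:ℝ)+1 := by positivity
      have h3 := mul_lt_mul_of_pos_right h1 hkp
      have h4 : ((rr kk : ℝ)/((kk:ℝ)+1) + 1) * ((kk:ℝ)+1)
          = (rr kk:ℝ) + ((kk:ℝ)+1) := by field_simp
      linarith [h4 ▸ h3]
    have h5 : ((ss kk * (kk+1) : ℕ):ℝ) < ((rr kk + kk + 1 : ℕ):ℝ) := by
      push_cast; linarith
    have h6 : ss kk * (kk+1) < rr kk + kk + 1 := by exact_mod_cast h5
    omega
  have hns : ∀ kk, 1 ≤ kk → (n:ℝ) ≤ (ss kk : ℝ) * 2^(kk+3) := by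
    intro kk h
    have hkr := hkkpos kk h
    have h1 : (kk:ℝ)*n/2^(kk+2) ≤ rr kk := Nat.le_ceil _
    have h2 : (rr kk : ℝ)/((kk:ℝ)+1) ≤ ss kk := Nat.le_ceil _
    have e1 : (kk:ℝ)*n ≤ (rr kk:ℝ)*2^(kk+2) := by
      rw [div_le_iff₀ (by positivity)] at h1; linarith
    have e2 : (rr kk:ℝ) ≤ (ss kk:ℝ)*((kk:ℝ)+1) := by
      rw [div_le_iff₀ (by positivity)] at h2; linarith
    have e3 : (kk:ℝ)+1 ≤ 2*kk := by
      have : (1:ℝ) ≤ kk := by exact_mod_cast h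
      linarith
    have hsnn : (0:ℝ) ≤ ss kk := Nat.cast_nonneg _
    have h2p : (0:ℝ) < 2^(kk+2) := by positivity
    have e4 : (kk:ℝ)*n ≤ (kk:ℝ)*((ss kk:ℝ)*2^(kk+3)) := by
      have e5 : (kk:ℝ)*n ≤ ((ss kk:ℝ)*((kk:ℝ)+1))*2^(kk+2) := by nlinarith
      have e6 : ((ss kk:ℝ)*(2*kk))*2^(kk+2) = (kk:ℝ)*((ss kk:ℝ)*2^(kk+3)) := by
        rw [pow_succ]; ring
      have e7 : ((ss kk:ℝ)*2^(kk+2))*((kk:ℝ)+1) ≤ ((ss kk:ℝ)*2^(kk+2))*(2*kk) :=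
        mul_le_mul_of_nonneg_left e3 (mul_nonneg hsnn h2p.le)
      nlinarith [e5, e6, e7]
    exact le_of_mul_le_mul_left e4 hkr
  have hincl : {x ∈ Set.Ioo (-(1 / 2) : ℝ) (1 / 2) | (n : ℝ) / 2 ≤ Dn δ τ n x}
      ⊆ ⋃ k:ℕ, F (k+1) := by
    rintro x ⟨hxI, hxD⟩
    by_contra hx
    simp only [Set.mem_iUnion, not_exists] at hx
    have hnotin : ∀ k:ℕ, ¬ ((rr (k+1) : ℝ) ≤ Dkn δ τ (k+1) n x) := by
      intro k hk
      exact hx k ⟨hxI, hk⟩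
    set f : ℕ → ℝ := fun k => Dkn δ τ (k+1) n x with hf
    set g : ℕ → ℝ := fun k => ((k:ℝ)+1) * n / 2^(k+3) with hg
    have hgs := St14.tsum_g n
    have hfg : ∀ k, f k < g k := by
      intro k
      obtain ⟨c, hc⟩ := St14.Dkn_nat δ τ (k+1) n x
      have hcr : c < rr (k+1) := by
        by_contra hcc
        apply hnotin k
        rw [hc]
        exact_mod_cast not_lt.mp hcc
      have hgpos : (0:ℝ) ≤ ((k+1:ℕ):ℝ)*n/2^(k+1+2) := by positivity
      have hceil : ((rr (k+1)):ℝ) < ((k+1:ℕ):ℝ)*n/2^(k+1+2) + 1 :=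
        Nat.ceil_lt_add_one hgpos
      have hcle : (c:ℝ) + 1 ≤ (rr (k+1):ℝ) := by exact_mod_cast hcr
      have hgeq : g k = ((k+1:ℕ):ℝ)*n/2^(k+1+2) := by
        rw [hg]; push_cast; ring_nf
      rw [hf]
      simp only
      rw [hc, hgeq]
      linarith
    have hfnn : ∀ k, 0 ≤ f k := fun k => St14.Dkn_nonneg δ τ (k+1) n x
    have hff : Summable f := Summable.of_nonneg_of_le hfnn (fun k => (hfg k).le) hgs.1
    have hlt : (∑' k, f k) < ∑' k, g k := Summable.tsum_lt_tsum (fun k => (hfg k).le) (hfg 0) hff hgs.1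
    rw [hgs.2] at hlt
    have hDn : Dn δ τ n x = ∑' k, f k := rfl
    rw [hDn] at hxD
    linarith
  refine le_trans (measure_mono hincl) (le_trans (measure_iUnion_le _) ?_)
  have hperk : ∀ k:ℕ, volume (F (k+1))
      ≤ ENNReal.ofReal ((Real.sqrt τ/(n:ℝ)^2) * (1/2:ℝ)^(k+1)) := by
    intro k
    have hk1 : 1 ≤ k+1 := Nat.succ_le_succ (Nat.zero_le k)
    have h1 := St14.count_bound δ τ hδ0 hδ1 hτ0 hτ1 b M mm hδb hMτ hmδ (k+1) hk1
      n (rr (k+1)) (ss (k+1)) (hrs (k+1) hk1)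
    refine le_trans h1 ?_
    have hch : ((n.choose (ss (k+1))):ENNReal) * ENNReal.ofReal (τ^((k+1)*(ss (k+1))))
        = ENNReal.ofReal ((n.choose (ss (k+1)):ℝ) * τ^((k+1)*(ss (k+1)))) := by
      rw [← ENNReal.ofReal_natCast (n.choose (ss (k+1))),
        ← ENNReal.ofReal_mul (Nat.cast_nonneg _)]
    rw [hch]
    apply ENNReal.ofReal_le_ofReal
    have hp := St14.perk τ hτ0 hτb (k+1) (ss (k+1)) n hk1 (hspos (k+1) hk1) hn
      (hns (k+1) hk1)
    have hrhs : (Real.sqrt τ/(n:ℝ)^2) * (1/2:ℝ)^(k+1)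
        = Real.sqrt τ / ((n:ℝ)^2 * 2^(k+1)) := by
      rw [div_pow, one_pow, div_mul_div_comm, mul_comm ((n:ℝ)^2)]
      ring_nf
    rw [hrhs, le_div_iff₀ (by positivity)]
    exact hp
  refine le_trans (ENNReal.tsum_le_tsum hperk) ?_
  have hsumm : Summable (fun k:ℕ => (Real.sqrt τ/(n:ℝ)^2) * (1/2:ℝ)^(k+1)) := by
    apply Summable.mul_left
    have hs : Summable (fun k:ℕ => (1/2:ℝ)*(1/2:ℝ)^k) :=
      (summable_geometric_of_lt_one (by norm_num) (by norm_num)).mul_left _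
    apply Summable.congr hs
    intro k
    rw [pow_succ]; ring
  rw [← ENNReal.ofReal_tsum_of_nonneg (fun k => by positivity) hsumm]
  apply ENNReal.ofReal_le_ofReal
  rw [tsum_mul_left]
  have hgeo : ∑' k:ℕ, (1/2:ℝ)^(k+1) = 1 := by
    have hh : ∀ k:ℕ, (1/2:ℝ)^(k+1) = (1/2)*(1/2)^k := fun k => by rw [pow_succ]; ring
    rw [tsum_congr hh, tsum_mul_left,
      tsum_geometric_of_lt_one (by norm_num) (by norm_num)]
    norm_num
  rw [hgeo, mul_one]
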